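/- Let (S, 𝒜, λ) be a measure space and let (f_i)_{i∈I} be an orthonormal family in L²(S, λ; ℂ). For each i let B_i be a measurable set of finite λ-measure such that f_i = 0 λ-a.e. outside B_i. Let m ≥ 1 and let A_1, …, A_m ⊆ S be measurable sets such that for every i ∈ I and every n, either B_i ⊆ A_n or λ(B_i ∩ A_n) = 0. Let F ⊆ I be a finite set, let c : F × F → ℂ, and define K'(x,y) := Σ_{i,j ∈ F} c(i,j) · f_i(x) · conj(f_j(y)). Then for every real number α: ∫_{A_1×⋯×A_m} det_α[(K'(x_p, x_q))_{p,q=1}^m] dλ(x_1)⋯dλ(x_m) = Σ det_α[(c(i_p, i_q))_{p,q=1}^m], where the sum on the right extends over all m-tuples (i_1,…,i_m) ∈ F^m with B_{i_p} ⊆ A_p for every p. -/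

import Mathlib

open MeasureTheory Classical

/-- The α-determinant: `det_α A = Σ_{σ ∈ S_n} α^{n − ν(σ)} ∏_p A p (σ p)`, where `ν(σ)` is the
number of cycles of `σ` (fixed points counted as cycles), so that
`n − ν(σ) = |support σ| − (number of non-trivial cycles of σ)`. -/
noncomputable def alphaDet {n : Type*} [DecidableEq n] [Fintype n]
    (α : ℝ) (M : Matrix n n ℂ) : ℂ :=
  ∑ σ : Equiv.Perm n,
    (α : ℂ) ^ (Fintype.card n -
        (Multiset.card σ.cycleType + (Fintype.card n - σ.support.card))) *
      ∏ p, M p (σ p)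

section PiAux
open scoped ENNReal

variable {ι : Type*} [Fintype ι] {α : ι → Type*} [∀ i, MeasurableSpace (α i)]

lemma pi_box_le (μ : ∀ i, Measure (α i)) (s : ∀ i, Set (α i)) (hs : ∀ i, MeasurableSet (s i)) :
    Measure.pi μ (Set.pi Set.univ s) ≤ ∏ i, μ i (s i) := by
  rw [Measure.pi_def,
    toMeasure_apply _ _ (MeasurableSet.pi Set.countable_univ fun i _ => hs i)]
  simpa using OuterMeasure.pi_pi_le (fun i => (μ i).toOuterMeasure) s

lemma pi_eval_null [DecidableEq ι] (μ : ∀ i, Measure (α i)) {i : ι} {s : Set (α i)}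
    (hs : μ i s = 0) : Measure.pi μ (Function.eval i ⁻¹' s) = 0 := by
  rcases exists_measurable_superset_of_null hs with ⟨t, hst, htm, hμt⟩
  refine measure_mono_null (Set.preimage_mono hst) ?_
  refine le_antisymm ?_ zero_le
  rw [← Set.univ_pi_update_univ]
  refine (pi_box_le μ _ ?_).trans ?_
  · intro j
    rcases eq_or_ne j i with rfl | h
    · simpa using htm
    · simp [Function.update_of_ne h]
  · exact le_of_eq (Finset.prod_eq_zero (Finset.mem_univ i) (by simp [hμt]))

lemma pi_mono_set {μ ν : ∀ i, Measure (α i)} (h : ∀ i, μ i ≤ ν i) {s : Set (∀ i, α i)}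
    (hs : MeasurableSet s) : Measure.pi μ s ≤ Measure.pi ν s := by
  rw [Measure.pi_def, Measure.pi_def, toMeasure_apply _ _ hs, toMeasure_apply _ _ hs]
  refine OuterMeasure.le_boundedBy.2 (fun t => ?_) s
  refine (OuterMeasure.boundedBy_le t).trans ?_
  exact Finset.prod_le_prod' fun i _ => Measure.le_iff'.1 (h i) _

lemma pi_restrict_univ_pi (μ : ∀ i, Measure (α i)) {U : ∀ i, Set (α i)}
    (hU : ∀ i, MeasurableSet (U i)) (hfin : ∀ i, μ i (U i) ≠ ⊤) :
    (Measure.pi μ).restrict (Set.pi Set.univ U) = Measure.pi (fun i => (μ i).restrict (U i)) := by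
  haveI : ∀ i, IsFiniteMeasure ((μ i).restrict (U i)) := fun i =>
    ⟨by rw [Measure.restrict_apply_univ]; exact (hfin i).lt_top⟩
  refine (Measure.pi_eq fun s hs => ?_).symm
  rw [Measure.restrict_apply (MeasurableSet.univ_pi hs), ← Set.pi_inter_distrib]
  refine le_antisymm ?_ ?_
  · refine (pi_box_le μ _ fun i => (hs i).inter (hU i)).trans (le_of_eq ?_)
    exact Finset.prod_congr rfl fun i _ => (Measure.restrict_apply (hs i)).symm
  · have h1 : Measure.pi (fun i => (μ i).restrict (U i)) (Set.pi Set.univ fun i => s i ∩ U i)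
        ≤ Measure.pi μ (Set.pi Set.univ fun i => s i ∩ U i) :=
      pi_mono_set (fun i => Measure.restrict_le_self)
        (MeasurableSet.univ_pi fun i => (hs i).inter (hU i))
    refine le_trans (le_of_eq ?_) h1
    rw [Measure.pi_pi]
    refine Finset.prod_congr rfl fun i _ => ?_
    rw [Measure.restrict_apply (hs i), Measure.restrict_apply ((hs i).inter (hU i)),
      Set.inter_assoc, Set.inter_self]

lemma integral_pi_prod {m : ℕ} {S : Type*} [MeasurableSpace S] (ν : Fin m → Measure S)
    [∀ p, SigmaFinite (ν p)] (H : Fin m → S → ℂ) :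
    ∫ x : Fin m → S, ∏ p, H p (x p) ∂(Measure.pi ν) = ∏ p, ∫ z, H p z ∂(ν p) :=
  MeasureTheory.integral_fintype_prod_eq_prod (μ := ν) H

lemma integrable_pi_prod {m : ℕ} {S : Type*} [MeasurableSpace S] (ν : Fin m → Measure S)
    [∀ p, SigmaFinite (ν p)] (H : Fin m → S → ℂ) (h : ∀ p, Integrable (H p) (ν p)) :
    Integrable (fun x : Fin m → S => ∏ p, H p (x p)) (Measure.pi ν) :=
  MeasureTheory.Integrable.fintype_prod_dep (f := H) (μ := ν) h

end PiAux

/-- Finite-rank kernel form of Theorem 2.1 (equation (2.26) of the paper): the integral of the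
α-determinant of the finite-rank kernel `K'(x,y) = Σ_{i,j ∈ F} c(i,j) f_i(x) conj(f_j(y))`
over support-compatible sets `A_1 × ⋯ × A_m` equals the sum of α-determinants of the
coefficient matrix over admissible index tuples. -/
theorem stmt_11
    {S : Type*} [MeasurableSpace S] (μ : Measure S)
    {I : Type*} (f : I → S → ℂ) (hf : ∀ i, MemLp (f i) 2 μ)
    (hnorm : ∀ i, ∫ x, ‖f i x‖ ^ 2 ∂μ = 1)
    (horth : ∀ i j, i ≠ j → ∫ x, f i x * (starRingEnd ℂ) (f j x) ∂μ = 0)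
    (B : I → Set S) (hB : ∀ i, MeasurableSet (B i)) (hBfin : ∀ i, μ (B i) < ⊤)
    (hsupp : ∀ i, ∀ᵐ x ∂μ, x ∉ B i → f i x = 0)
    (m : ℕ) (hm : 1 ≤ m)
    (A : Fin m → Set S) (hA : ∀ n, MeasurableSet (A n))
    (hcompat : ∀ i n, B i ⊆ A n ∨ μ (B i ∩ A n) = 0)
    (F : Finset I) (c : I → I → ℂ) (α : ℝ) :
    ∫ x : Fin m → S,
        alphaDet α (Matrix.of fun p q : Fin m =>
          ∑ i ∈ F, ∑ j ∈ F, c i j * f i (x p) * (starRingEnd ℂ) (f j (x q)))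
        ∂(Measure.pi fun p => μ.restrict (A p))
      = ∑ i ∈ (Fintype.piFinset fun _ : Fin m => F).filter (fun i => ∀ p, B (i p) ⊆ A p),
          alphaDet α (Matrix.of fun p q : Fin m => c (i p) (i q)) := by
  classical
  set g : I → S → ℂ := fun i => (B i).indicator (f i) with hgdef
  have hg0 : ∀ i z, z ∉ B i → g i z = 0 := fun i z hz => Set.indicator_of_notMem hz _
  have hgf : ∀ i, g i =ᵐ[μ] f i := by
    intro i
    filter_upwards [hsupp i] with z hz
    by_cases h : z ∈ B i
    · simp [hgdef, Set.indicator_of_mem h]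
    · simp [hgdef, Set.indicator_of_notMem h, hz h]
  have hgmem : ∀ i, MemLp (g i) 2 μ := fun i => MemLp.ae_eq (hgf i).symm (hf i)
  -- integrability of products over μ
  have hmul : ∀ i j : I, Integrable (fun z => g i z * (starRingEnd ℂ) (g j z)) μ := by
    intro i j
    have hcj : MemLp (fun z => (starRingEnd ℂ) (g j z)) 2 μ :=
      MemLp.of_le (hgmem j)
        (RCLike.continuous_conj.comp_aestronglyMeasurable (hgmem j).1)
        (Filter.Eventually.of_forall fun z => by simp)
    have h111 : (1 : ENNReal) / 1 = 1 / 2 + 1 / 2 := by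
      rw [ENNReal.add_halves]; simp
    haveI : ENNReal.HolderTriple 2 2 1 := ⟨by rw [ENNReal.inv_two_add_inv_two, inv_one]⟩
    have h2 := MemLp.smul (μ := μ) (r := 1) hcj (hgmem i)
    rw [memLp_one_iff_integrable] at h2
    exact h2
  -- the union of supports
  set U : Set S := ⋃ i ∈ F, B i with hUdef
  have hUm : MeasurableSet U := F.measurableSet_biUnion fun i _ => hB i
  have hUfin : μ U ≠ ⊤ := by
    refine ne_top_of_le_ne_top ?_ (measure_biUnion_finset_le F B)
    exact (ENNReal.sum_lt_top.2 fun i _ => hBfin i).ne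
  have hBU : ∀ i ∈ F, B i ⊆ U := fun i hi => Set.subset_biUnion_of_mem hi
  have hρfin : ∀ p : Fin m, (μ.restrict (A p)) U ≠ ⊤ := by
    intro p
    rw [Measure.restrict_apply hUm]
    exact (lt_of_le_of_lt (measure_mono Set.inter_subset_left) hUfin.lt_top).ne
  haveI hρinst : ∀ p : Fin m, IsFiniteMeasure ((μ.restrict (A p)).restrict U) := fun p =>
    ⟨by rw [Measure.restrict_apply_univ]; exact (hρfin p).lt_top⟩
  -- the key inner-product evaluation
  have eval : ∀ (p : Fin m) (i j : I), i ∈ F →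
      ∫ z, g i z * (starRingEnd ℂ) (g j z) ∂((μ.restrict (A p)).restrict U)
        = if i = j ∧ B i ⊆ A p then 1 else 0 := by
    intro p i j hiF
    rw [setIntegral_eq_integral_of_forall_compl_eq_zero
      (fun z hz => by rw [hg0 i z fun hzB => hz (hBU i hiF hzB), zero_mul])]
    rcases hcompat i p with hi | hi
    · rw [setIntegral_eq_integral_of_forall_compl_eq_zero
        (fun z hz => by rw [hg0 i z fun hzB => hz (hi hzB), zero_mul])]
      by_cases hij : i = j
      · subst hij
        rw [if_pos ⟨rfl, hi⟩]
        have hpt : ∀ z, g i z * (starRingEnd ℂ) (g i z) = ((‖g i z‖ ^ 2 : ℝ) : ℂ) := by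
          intro z
          rw [Complex.mul_conj]
          norm_cast
          rw [Complex.normSq_eq_norm_sq]
        simp_rw [hpt]
        have h1 : ∫ z, ‖g i z‖ ^ 2 ∂μ = 1 := by
          rw [← hnorm i]
          refine integral_congr_ae ?_
          filter_upwards [hgf i] with z hz
          rw [hz]
        have h2 : ∀ r : ℝ, (r : ℂ) = (RCLike.ofReal r : ℂ) := fun r => rfl
        simp_rw [h2]
        rw [integral_ofReal, h1]
        exact RCLike.ofReal_one
      · rw [if_neg (by rintro ⟨rfl, -⟩; exact hij rfl)]
        rw [integral_congr_ae ((hgf i).mp ((hgf j).mono fun z h1 h2 => by rw [h2, h1]))]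
        exact horth i j hij
    · have hni : (μ.restrict (A p)) (B i) = 0 := by
        rw [Measure.restrict_apply (hB i)]; exact hi
      have hz0 : ∫ z, g i z * (starRingEnd ℂ) (g j z) ∂(μ.restrict (A p)) = 0 := by
        refine integral_eq_zero_of_ae ?_
        filter_upwards [measure_eq_zero_iff_ae_notMem.1 hni] with z hz
        simp [hg0 i z hz]
      have hcnot : ¬(i = j ∧ B i ⊆ A p) := by
        rintro ⟨rfl, hBA⟩
        have hBnull : μ (B i) = 0 := by rwa [Set.inter_eq_left.2 hBA] at hi
        have hf0 : ∀ᵐ z ∂μ, f i z = 0 := by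
          filter_upwards [measure_eq_zero_iff_ae_notMem.1 hBnull, hsupp i] with z h1 h2
          exact h2 h1
        have h10 : (1 : ℝ) = 0 := by
          rw [← hnorm i]
          refine integral_eq_zero_of_ae ?_
          filter_upwards [hf0] with z hz
          simp [hz]
        norm_num at h10
      rw [hz0, if_neg hcnot]
  -- Step A: replace f by g in the integrand
  have stepA : ∫ x : Fin m → S,
      alphaDet α (Matrix.of fun p q : Fin m =>
        ∑ i ∈ F, ∑ j ∈ F, c i j * f i (x p) * (starRingEnd ℂ) (f j (x q)))
      ∂(Measure.pi fun p => μ.restrict (A p))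
      = ∫ x : Fin m → S,
      alphaDet α (Matrix.of fun p q : Fin m =>
        ∑ i ∈ F, ∑ j ∈ F, c i j * g i (x p) * (starRingEnd ℂ) (g j (x q)))
      ∂(Measure.pi fun p => μ.restrict (A p)) := by
    refine integral_congr_ae ?_
    have hae : ∀ᵐ x : Fin m → S ∂(Measure.pi fun p => μ.restrict (A p)),
        ∀ i ∈ (F : Set I), ∀ p : Fin m, f i (x p) = g i (x p) := by
      rw [ae_ball_iff F.countable_toSet]
      intro i hi
      rw [ae_all_iff]
      intro p
      have hμn : μ {z | ¬ f i z = g i z} = 0 := ae_iff.1 (hgf i).symm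
      have hνn : (μ.restrict (A p)) {z | ¬ f i z = g i z} = 0 :=
        le_antisymm (le_trans (Measure.le_iff'.1 Measure.restrict_le_self _) hμn.le) zero_le
      have hpi := pi_eval_null (fun p => μ.restrict (A p)) (i := p) hνn
      rw [ae_iff]
      exact hpi
    filter_upwards [hae] with x hx
    congr 1
    ext p q
    simp only [Matrix.of_apply]
    refine Finset.sum_congr rfl fun i hi => Finset.sum_congr rfl fun j hj => ?_
    rw [hx i (Finset.mem_coe.mpr hi) p, hx j (Finset.mem_coe.mpr hj) q]
  -- the g-integrand vanishes off the box
  have hGzero : ∀ x : Fin m → S, x ∉ Set.pi Set.univ (fun _ : Fin m => U) →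
      alphaDet α (Matrix.of fun p q : Fin m =>
        ∑ i ∈ F, ∑ j ∈ F, c i j * g i (x p) * (starRingEnd ℂ) (g j (x q))) = 0 := by
    intro x hx
    have hex : ∃ p : Fin m, x p ∉ U := by
      by_contra h
      push_neg at h
      exact hx fun p _ => h p
    obtain ⟨p, hp⟩ := hex
    rw [alphaDet]
    refine Finset.sum_eq_zero fun σ _ => ?_
    rw [Finset.prod_eq_zero (Finset.mem_univ p), mul_zero]
    simp only [Matrix.of_apply]
    refine Finset.sum_eq_zero fun i hi => Finset.sum_eq_zero fun j hj => ?_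
    rw [hg0 i (x p) fun h => hp (hBU i hi h), mul_zero, zero_mul]
  -- Step B: pass to the finite product measure
  have stepB : ∫ x : Fin m → S,
      alphaDet α (Matrix.of fun p q : Fin m =>
        ∑ i ∈ F, ∑ j ∈ F, c i j * g i (x p) * (starRingEnd ℂ) (g j (x q)))
      ∂(Measure.pi fun p => μ.restrict (A p))
      = ∫ x : Fin m → S,
      alphaDet α (Matrix.of fun p q : Fin m =>
        ∑ i ∈ F, ∑ j ∈ F, c i j * g i (x p) * (starRingEnd ℂ) (g j (x q)))
      ∂(Measure.pi fun p => (μ.restrict (A p)).restrict U) := by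
    rw [← pi_restrict_univ_pi (fun p => μ.restrict (A p)) (fun _ => hUm) hρfin]
    exact (setIntegral_eq_integral_of_forall_compl_eq_zero hGzero).symm
  rw [stepA, stepB]
  set W : Equiv.Perm (Fin m) → ℂ := fun σ =>
    (α : ℂ) ^ (Fintype.card (Fin m) -
      (Multiset.card σ.cycleType + (Fintype.card (Fin m) - σ.support.card))) with hW
  -- pointwise expansion of the α-determinant of the kernel
  have hexp : ∀ x : Fin m → S,
      alphaDet α (Matrix.of fun p q : Fin m =>
        ∑ i ∈ F, ∑ j ∈ F, c i j * g i (x p) * (starRingEnd ℂ) (g j (x q)))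
      = ∑ σ : Equiv.Perm (Fin m),
          ∑ d ∈ Fintype.piFinset (fun _ : Fin m => F),
          ∑ e ∈ Fintype.piFinset (fun _ : Fin m => F),
            ((W σ * ∏ p, c (d p) (e p))
              * ∏ p, (g (d p) (x p) * (starRingEnd ℂ) (g (e (σ.symm p)) (x p)))) := by
    intro x
    rw [alphaDet]
    refine Finset.sum_congr rfl fun σ _ => ?_
    have h1 : (∏ p, (Matrix.of fun p q : Fin m =>
          ∑ i ∈ F, ∑ j ∈ F, c i j * g i (x p) * (starRingEnd ℂ) (g j (x q))) p (σ p))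
        = ∑ d ∈ Fintype.piFinset (fun _ : Fin m => F),
            ∑ e ∈ Fintype.piFinset (fun _ : Fin m => F),
              ∏ p, (c (d p) (e p) * g (d p) (x p) * (starRingEnd ℂ) (g (e p) (x (σ p)))) := by
      simp only [Matrix.of_apply]
      rw [Finset.prod_univ_sum]
      refine Finset.sum_congr rfl fun d hd => ?_
      rw [Finset.prod_univ_sum]
    rw [h1, Finset.mul_sum]
    refine Finset.sum_congr rfl fun d hd => ?_
    rw [Finset.mul_sum]
    refine Finset.sum_congr rfl fun e he => ?_
    have h3 : (∏ p, (starRingEnd ℂ) (g (e p) (x (σ p))))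
        = ∏ p, (starRingEnd ℂ) (g (e (σ.symm p)) (x p)) := by
      rw [← Equiv.prod_comp σ (fun p => (starRingEnd ℂ) (g (e (σ.symm p)) (x p)))]
      simp
    have h2 : ∏ p, (c (d p) (e p) * g (d p) (x p) * (starRingEnd ℂ) (g (e p) (x (σ p))))
        = (∏ p, c (d p) (e p))
          * ∏ p, (g (d p) (x p) * (starRingEnd ℂ) (g (e (σ.symm p)) (x p))) := by
      rw [Finset.prod_mul_distrib, Finset.prod_mul_distrib, h3, mul_assoc,
        ← Finset.prod_mul_distrib]
    rw [h2, ← mul_assoc]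
  simp_rw [hexp]
  -- integrability of each term
  have hmulρ : ∀ (p : Fin m) (i j : I),
      Integrable (fun z => g i z * (starRingEnd ℂ) (g j z)) ((μ.restrict (A p)).restrict U) :=
    fun p i j => ((hmul i j).restrict).restrict
  have hint : ∀ (σ : Equiv.Perm (Fin m)) (d e : Fin m → I),
      Integrable (fun x : Fin m → S =>
        ((W σ * ∏ p, c (d p) (e p))
          * ∏ p, (g (d p) (x p) * (starRingEnd ℂ) (g (e (σ.symm p)) (x p)))))
        (Measure.pi fun p => (μ.restrict (A p)).restrict U) := by
    intro σ d e
    exact (integrable_pi_prod _ _ fun p => hmulρ p (d p) (e (σ.symm p))).const_mul _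
  rw [integral_finset_sum _ (fun σ _ => integrable_finset_sum _ fun d _ =>
    integrable_finset_sum _ fun e _ => hint σ d e)]
  calc (∑ σ : Equiv.Perm (Fin m), ∫ x : Fin m → S,
      ∑ d ∈ Fintype.piFinset (fun _ : Fin m => F), ∑ e ∈ Fintype.piFinset (fun _ : Fin m => F),
        ((W σ * ∏ p, c (d p) (e p))
          * ∏ p, (g (d p) (x p) * (starRingEnd ℂ) (g (e (σ.symm p)) (x p))))
      ∂(Measure.pi fun p => (μ.restrict (A p)).restrict U))
      = ∑ σ : Equiv.Perm (Fin m), ∑ d ∈ Fintype.piFinset (fun _ : Fin m => F),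
          ∑ e ∈ Fintype.piFinset (fun _ : Fin m => F),
            (W σ * ∏ p, c (d p) (e p)) *
              ∏ p, ∫ z, g (d p) z * (starRingEnd ℂ) (g (e (σ.symm p)) z)
                ∂((μ.restrict (A p)).restrict U) := by
        refine Finset.sum_congr rfl fun σ _ => ?_
        rw [integral_finset_sum _ (fun d _ => integrable_finset_sum _ fun e _ => hint σ d e)]
        refine Finset.sum_congr rfl fun d _ => ?_
        rw [integral_finset_sum _ (fun e _ => hint σ d e)]
        refine Finset.sum_congr rfl fun e _ => ?_
        rw [integral_const_mul,
          integral_pi_prod (fun p => (μ.restrict (A p)).restrict U)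
            (fun p z => g (d p) z * (starRingEnd ℂ) (g (e (σ.symm p)) z))]
    _ = ∑ σ : Equiv.Perm (Fin m), ∑ d ∈ Fintype.piFinset (fun _ : Fin m => F),
          (if (∀ p, B (d p) ⊆ A p) then W σ * ∏ p, c (d p) (d (σ p)) else 0) := by
        refine Finset.sum_congr rfl fun σ _ => Finset.sum_congr rfl fun d hd => ?_
        have hd' : ∀ p, d p ∈ F := fun p => (Fintype.mem_piFinset.1 hd) p
        have hterm : ∀ e : Fin m → I,
            ((W σ * ∏ p, c (d p) (e p)) *
              ∏ p, ∫ z, g (d p) z * (starRingEnd ℂ) (g (e (σ.symm p)) z)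
                ∂((μ.restrict (A p)).restrict U))
            = if e = (fun q => d (σ q)) then
                (if (∀ p, B (d p) ⊆ A p) then W σ * ∏ p, c (d p) (e p) else 0) else 0 := by
          intro e
          have he1 : (∏ p, ∫ z, g (d p) z * (starRingEnd ℂ) (g (e (σ.symm p)) z)
              ∂((μ.restrict (A p)).restrict U))
              = ∏ p, (if d p = e (σ.symm p) ∧ B (d p) ⊆ A p then (1:ℂ) else 0) :=
            Finset.prod_congr rfl fun p _ => eval p (d p) (e (σ.symm p)) (hd' p)
          rw [he1, Fintype.prod_boole]
          by_cases h1 : ∀ p, d p = e (σ.symm p) ∧ B (d p) ⊆ A p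
          · have he : e = fun q => d (σ q) := funext fun q => by
              have h2 := (h1 (σ q)).1
              simp only [Equiv.symm_apply_apply] at h2
              exact h2.symm
            rw [if_pos h1, if_pos he, if_pos fun p => (h1 p).2, mul_one]
          · rw [if_neg h1, mul_zero]
            by_cases he : e = (fun q => d (σ q))
            · rw [if_pos he]
              by_cases hQ : ∀ p, B (d p) ⊆ A p
              · exfalso
                apply h1
                intro p
                refine ⟨?_, hQ p⟩
                rw [he]
                simp
              · rw [if_neg hQ]
            · rw [if_neg he]
        rw [Finset.sum_congr rfl fun e _ => hterm e]
        rw [Finset.sum_ite_eq' (Fintype.piFinset fun _ : Fin m => F) (fun q => d (σ q))]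
        rw [if_pos (Fintype.mem_piFinset.2 fun q => hd' (σ q))]
    _ = ∑ d ∈ Fintype.piFinset (fun _ : Fin m => F),
          (if (∀ p, B (d p) ⊆ A p) then
            ∑ σ : Equiv.Perm (Fin m), W σ * ∏ p, c (d p) (d (σ p)) else 0) := by
        rw [Finset.sum_comm]
        refine Finset.sum_congr rfl fun d _ => ?_
        by_cases hQ : ∀ p, B (d p) ⊆ A p
        · simp only [if_pos hQ]
        · simp only [if_neg hQ, Finset.sum_const_zero]
    _ = ∑ d ∈ (Fintype.piFinset fun _ : Fin m => F).filter (fun i => ∀ p, B (i p) ⊆ A p),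
          alphaDet α (Matrix.of fun p q : Fin m => c (d p) (d q)) := by
        rw [Finset.sum_filter]
        refine Finset.sum_congr rfl fun d _ => ?_
        by_cases hQ : ∀ p, B (d p) ⊆ A p
        · rw [if_pos hQ, if_pos hQ, alphaDet]
          refine Finset.sum_congr rfl fun σ _ => ?_
          simp only [Matrix.of_apply, hW]
        · rw [if_neg hQ, if_neg hQ]
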